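/- Let V be a real inner product space, W a real normed space, and F₁, …, F_s linear subspaces of V forming an internal direct sum E = F₁ ⊕ ⋯ ⊕ F_s. Suppose θ ∈ (0, π/2] is such that for every i and all nonzero u ∈ F_i and nonzero w ∈ ⊕_{j ≠ i} F_j, the angle between u and w is at least θ. Then for every v ∈ E with decomposition v = v₁ + ⋯ + v_s (v_i ∈ F_i), one has ‖v_i‖ ≤ ‖v‖ / sin θ for each i; consequently, for every linear map T : V → W, ‖T v‖ ≤ (s / sin θ) (max_i ‖T|_{F_i}‖) ‖v‖, where ‖T|_{F_i}‖ denotes the operator norm of the restriction of T to F_i. -/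

import Mathlib

/-- Components of a vector in a direct sum of subspaces with pairwise angles (between each
subspace and the sum of the others) at least `θ` satisfy `‖vᵢ‖ ≤ ‖v‖ / sin θ`; hence any
linear map `T` satisfies `‖T v‖ ≤ (s / sin θ) (maxᵢ ‖T|_{Fᵢ}‖) ‖v‖` on the direct sum. -/
theorem stmt5 {V W : Type*} [NormedAddCommGroup V] [InnerProductSpace ℝ V]
    [NormedAddCommGroup W] [NormedSpace ℝ W]
    (s : ℕ) (F : Fin s → Submodule ℝ V)
    (hind : ∀ c : Fin s → V, (∀ i, c i ∈ F i) → ∑ i, c i = 0 → ∀ i, c i = 0)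
    (θ : ℝ) (hθ₁ : 0 < θ) (hθ₂ : θ ≤ Real.pi / 2)
    (hangle : ∀ i : Fin s, ∀ u ∈ F i, u ≠ 0 →
      ∀ w ∈ (⨆ j : Fin s, ⨆ _ : j ≠ i, F j : Submodule ℝ V), w ≠ 0 →
        θ ≤ InnerProductGeometry.angle u w)
    (v : V) (vs : Fin s → V) (hvs : ∀ i, vs i ∈ F i) (hv : v = ∑ i, vs i) :
    (∀ i, ‖vs i‖ ≤ ‖v‖ / Real.sin θ) ∧
    ∀ T : V →L[ℝ] W,
      ‖T v‖ ≤ ((s : ℝ) / Real.sin θ) * (⨆ i : Fin s, ‖T.comp (F i).subtypeL‖) * ‖v‖ := by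
  have hθπ : θ < Real.pi := lt_of_le_of_lt hθ₂ (by linarith [Real.pi_pos])
  have hsin : 0 < Real.sin θ := Real.sin_pos_of_pos_of_lt_pi hθ₁ hθπ
  have hsin1 : Real.sin θ ≤ 1 := Real.sin_le_one θ
  have hcos0 : 0 ≤ Real.cos θ := Real.cos_nonneg_of_mem_Icc ⟨by linarith, hθ₂⟩
  have key : ∀ i, ‖vs i‖ ≤ ‖v‖ / Real.sin θ := by
    intro i
    rw [le_div_iff₀ hsin]
    set u := vs i with hu
    set w := v - vs i with hwdef
    have hvuw : v = u + w := by rw [hwdef]; abel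
    have hwmem : w ∈ (⨆ j : Fin s, ⨆ _ : j ≠ i, F j : Submodule ℝ V) := by
      have : w = ∑ j ∈ Finset.univ.erase i, vs j := by
        rw [hwdef, hv, ← Finset.sum_erase_add _ _ (Finset.mem_univ i)]
        abel
      rw [this]
      refine Submodule.sum_mem _ fun j hj => ?_
      exact Submodule.mem_iSup_of_mem j
        (Submodule.mem_iSup_of_mem (Finset.ne_of_mem_erase hj) (hvs j))
    have hv0 : (0:ℝ) ≤ ‖v‖ := norm_nonneg v
    by_cases hu0 : u = 0
    · simp only [hu0, norm_zero, zero_mul]; exact hv0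
    by_cases hw0 : w = 0
    · have : v = u := by rw [hvuw, hw0, add_zero]
      rw [this]
      nlinarith [norm_nonneg u]
    · have h1 : θ ≤ InnerProductGeometry.angle u w := hangle i u (hvs i) hu0 w hwmem hw0
      have h2 : θ ≤ InnerProductGeometry.angle u (-w) := by
        refine hangle i u (hvs i) hu0 (-w) (Submodule.neg_mem _ hwmem) (neg_ne_zero.mpr hw0)
      rw [InnerProductGeometry.angle_neg_right] at h2
      set α := InnerProductGeometry.angle u w with hα
      have hcosle : Real.cos α ≤ Real.cos θ :=
        Real.cos_le_cos_of_nonneg_of_le_pi hθ₁.le (InnerProductGeometry.angle_le_pi u w) h1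
      have hcosge : -Real.cos θ ≤ Real.cos α := by
        have := Real.cos_le_cos_of_nonneg_of_le_pi (InnerProductGeometry.angle_nonneg u w)
          (show Real.pi - θ ≤ Real.pi by linarith) (show α ≤ Real.pi - θ by linarith)
        rwa [Real.cos_pi_sub] at this
      have hun : ‖u‖ ≠ 0 := norm_ne_zero_iff.mpr hu0
      have hwn : ‖w‖ ≠ 0 := norm_ne_zero_iff.mpr hw0
      have hinner : (inner ℝ u w : ℝ) = Real.cos α * (‖u‖ * ‖w‖) := by
        rw [hα, InnerProductGeometry.cos_angle]
        field_simp
      have hnormsq : ‖v‖ ^ 2 = ‖u‖ ^ 2 + 2 * (inner ℝ u w : ℝ) + ‖w‖ ^ 2 := by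
        rw [hvuw]; exact norm_add_sq_real u w
      have hineq : (‖u‖ * Real.sin θ) ^ 2 ≤ ‖v‖ ^ 2 := by
        have hsq : Real.sin θ ^ 2 = 1 - Real.cos θ ^ 2 := by
          rw [Real.sin_sq]
        rw [hnormsq, hinner]
        nlinarith [sq_nonneg (‖w‖ - ‖u‖ * Real.cos θ), norm_nonneg u, norm_nonneg w,
          mul_nonneg (norm_nonneg u) (norm_nonneg w)]
      have h3 := Real.sqrt_le_sqrt hineq
      rw [Real.sqrt_sq (by positivity), Real.sqrt_sq (norm_nonneg v)] at h3
      exact h3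
  refine ⟨key, fun T => ?_⟩
  set M := ⨆ i : Fin s, ‖T.comp (F i).subtypeL‖ with hM
  have hbdd : BddAbove (Set.range fun i : Fin s => ‖T.comp (F i).subtypeL‖) :=
    Set.Finite.bddAbove (Set.finite_range _)
  have hM0 : 0 ≤ M := by
    rcases Nat.eq_zero_or_pos s with hs | hs
    · subst hs
      rw [hM]
      simp [Real.iSup_of_isEmpty]
    · exact le_trans (norm_nonneg (T.comp (F ⟨0, hs⟩).subtypeL)) (le_ciSup hbdd ⟨0, hs⟩)
  have hterm : ∀ i, ‖T (vs i)‖ ≤ M * (‖v‖ / Real.sin θ) := by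
    intro i
    have h1 : ‖T (vs i)‖ ≤ ‖T.comp (F i).subtypeL‖ * ‖vs i‖ := by
      have := (T.comp (F i).subtypeL).le_opNorm ⟨vs i, hvs i⟩
      simpa using this
    have h2 : ‖T.comp (F i).subtypeL‖ ≤ M := le_ciSup hbdd i
    have h3 : ‖vs i‖ ≤ ‖v‖ / Real.sin θ := key i
    calc ‖T (vs i)‖ ≤ ‖T.comp (F i).subtypeL‖ * ‖vs i‖ := h1
      _ ≤ M * (‖v‖ / Real.sin θ) :=
        mul_le_mul h2 h3 (norm_nonneg _) hM0
  calc ‖T v‖ = ‖∑ i, T (vs i)‖ := by rw [hv, map_sum]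
    _ ≤ ∑ i, ‖T (vs i)‖ := norm_sum_le _ _
    _ ≤ ∑ _i : Fin s, M * (‖v‖ / Real.sin θ) := Finset.sum_le_sum fun i _ => hterm i
    _ = (s : ℝ) * (M * (‖v‖ / Real.sin θ)) := by simp [Finset.sum_const, nsmul_eq_mul]
    _ = ((s : ℝ) / Real.sin θ) * M * ‖v‖ := by ring
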